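/- Let 0 ≤ p₁ < 1/2 < p₂ ≤ 1 and c = min{1/2 − p₁, p₂ − 1/2}. For ℓ ≥ 7 with ℓ ≥ (1/c²)·logₑ(ℓ+1), the number of binary sequences of length ℓ+1 containing at least one window of ℓ consecutive bits with weight outside [p₁ℓ, p₂ℓ] is at most 2^{ℓ−3}. -/

import Mathlib

open Finset

/-- Hamming weight of a binary sequence. -/
def wt (l : List Bool) : ℕ := l.count true

private def idx (n : ℕ) (u : List Bool) : Finset ℕ :=
  (Finset.range n).filter (fun i => u.getD i false = true)

private lemma count_eq_sum' (u : List Bool) :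
    u.count true = ∑ i ∈ Finset.range u.length, if u.getD i false = true then 1 else 0 := by
  induction u with
  | nil => simp
  | cons b t ih =>
    rw [List.count_cons, List.length_cons, Finset.sum_range_succ']
    simp only [List.getD_cons_succ, List.getD_cons_zero]
    rw [← ih]
    cases b <;> simp

private lemma wt_eq_card {n : ℕ} (u : List Bool) (hu : u.length = n) :
    wt u = (idx n u).card := by
  rw [wt, idx, count_eq_sum', Finset.card_filter, hu]

private lemma idx_inj {n : ℕ} {u v : List Bool} (hu : u.length = n) (hv : v.length = n)
    (h : idx n u = idx n v) : u = v := by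
  apply List.ext_getElem (hu.trans hv.symm)
  intro i h1 h2
  have hi : i < n := hu ▸ h1
  have key : (u[i]'h1 = true) ↔ (v[i]'h2 = true) := by
    rw [← List.getD_eq_getElem u false h1, ← List.getD_eq_getElem v false h2]
    constructor
    · intro hh
      have hm : i ∈ idx n u := Finset.mem_filter.2 ⟨Finset.mem_range.2 hi, hh⟩
      rw [h] at hm
      exact (Finset.mem_filter.1 hm).2
    · intro hh
      have hm : i ∈ idx n v := Finset.mem_filter.2 ⟨Finset.mem_range.2 hi, hh⟩
      rw [← h] at hm
      exact (Finset.mem_filter.1 hm).2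
  cases hx : u[i]'h1 <;> cases hy : v[i]'h2 <;> simp_all

private lemma take_decomp {n : ℕ} {x : List Bool} (hx : x.length = n + 1) :
    x = x.take n ++ [x.getD n false] := by
  have hlen : (x.take n).length = n := by simp [hx]
  apply List.ext_getElem (by simp [hx])
  intro i h1 h2
  have hi : i < n + 1 := hx ▸ h1
  rcases Nat.lt_or_ge i n with h | h
  · rw [List.getElem_append_left (by omega)]
    simp [List.getElem_take]
  · have : i = n := by omega
    subst this
    rw [List.getElem_append_right (by omega)]
    simp [hlen, List.getElem?_eq_getElem h1]

private lemma drop_decomp {n : ℕ} {x : List Bool} (hx : x.length = n + 1) :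
    x = x.getD 0 false :: x.drop 1 := by
  cases x with
  | nil => simp at hx
  | cons b t => simp

private lemma chernoff_low (n : ℕ) (p a : ℝ) (ha : 0 < a) (hpa : p = 1/2 - a) :
    ∑ k ∈ (range (n+1)).filter (fun k : ℕ => (k:ℝ) < p * n), ((n.choose k : ℕ):ℝ)
      ≤ 2^n * Real.exp (-(2*a^2*n)) := by
  have step1 : ∑ k ∈ (range (n+1)).filter (fun k : ℕ => (k:ℝ) < p * n), ((n.choose k : ℕ):ℝ)
      ≤ ∑ k ∈ range (n+1), (n.choose k : ℝ) * Real.exp (4*a*(p*n - k)) := by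
    calc ∑ k ∈ (range (n+1)).filter (fun k : ℕ => (k:ℝ) < p * n), ((n.choose k : ℕ):ℝ)
        ≤ ∑ k ∈ (range (n+1)).filter (fun k : ℕ => (k:ℝ) < p * n),
            (n.choose k : ℝ) * Real.exp (4*a*(p*n - k)) := by
          apply Finset.sum_le_sum
          intro k hk
          simp only [mem_filter, mem_range] at hk
          have h1 : (1:ℝ) ≤ Real.exp (4*a*(p*n - k)) := by
            apply Real.one_le_exp
            have : (0:ℝ) ≤ p*n - k := by linarith [hk.2]
            positivity
          nlinarith [show (0:ℝ) ≤ (n.choose k : ℝ) from Nat.cast_nonneg _]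
      _ ≤ ∑ k ∈ range (n+1), (n.choose k : ℝ) * Real.exp (4*a*(p*n - k)) := by
          apply Finset.sum_le_sum_of_subset_of_nonneg (filter_subset _ _)
          intro k _ _
          positivity
  have step2 : ∑ k ∈ range (n+1), (n.choose k : ℝ) * Real.exp (4*a*(p*n - k))
      = (Real.exp (4*a*p) * (Real.exp (-(4*a)) + 1))^n := by
    have expand : ∀ k : ℕ, Real.exp (4*a*(p*n - k)) = Real.exp ((4*a*p)*n) * Real.exp (-(4*a))^k := by
      intro k
      rw [← Real.exp_nat_mul, ← Real.exp_add]
      ring_nf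
    calc ∑ k ∈ range (n+1), (n.choose k : ℝ) * Real.exp (4*a*(p*n - k))
        = Real.exp ((4*a*p)*n) * ∑ k ∈ range (n+1), Real.exp (-(4*a))^k * 1^(n-k) * n.choose k := by
          rw [Finset.mul_sum]
          apply Finset.sum_congr rfl
          intro k _
          rw [expand k]; ring
      _ = Real.exp ((4*a*p)*n) * (Real.exp (-(4*a)) + 1)^n := by rw [← add_pow]
      _ = (Real.exp (4*a*p) * (Real.exp (-(4*a)) + 1))^n := by
          rw [mul_pow, ← Real.exp_nat_mul]; ring_nf
  have base : Real.exp (4*a*p) * (Real.exp (-(4*a)) + 1) ≤ 2 * Real.exp (-(2*a^2)) := by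
    have h1 : Real.exp (4*a*p) * (Real.exp (-(4*a)) + 1)
        = Real.exp (-(4*a^2)) * (Real.exp (2*a) + Real.exp (-(2*a))) := by
      rw [mul_add, mul_add, ← Real.exp_add, ← Real.exp_add, ← Real.exp_add, hpa]
      ring_nf
    have h2 : Real.exp (2*a) + Real.exp (-(2*a)) = 2 * Real.cosh (2*a) := by
      rw [Real.cosh_eq]; ring
    have h3 : Real.cosh (2*a) ≤ Real.exp ((2*a)^2/2) := Real.cosh_le_exp_half_sq _
    have h4 : Real.exp ((2*a)^2/2) = Real.exp (2*a^2) := by ring_nf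
    rw [h1, h2]
    have h5 : Real.exp (-(4*a^2)) * (2 * Real.cosh (2*a))
        ≤ Real.exp (-(4*a^2)) * (2 * Real.exp (2*a^2)) := by
      have := Real.exp_pos (-(4*a^2))
      nlinarith [h3, h4 ▸ h3]
    calc Real.exp (-(4*a^2)) * (2 * Real.cosh (2*a))
        ≤ Real.exp (-(4*a^2)) * (2 * Real.exp (2*a^2)) := h5
      _ = 2 * (Real.exp (-(4*a^2)) * Real.exp (2*a^2)) := by ring
      _ = 2 * Real.exp (-(4*a^2) + 2*a^2) := by rw [Real.exp_add]
      _ = 2 * Real.exp (-(2*a^2)) := by ring_nf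
  calc ∑ k ∈ (range (n+1)).filter (fun k : ℕ => (k:ℝ) < p * n), ((n.choose k : ℕ):ℝ)
      ≤ (Real.exp (4*a*p) * (Real.exp (-(4*a)) + 1))^n := step1.trans_eq step2
    _ ≤ (2 * Real.exp (-(2*a^2)))^n := by
        apply pow_le_pow_left₀ (by positivity) base
    _ = 2^n * Real.exp (-(2*a^2*n)) := by
        rw [mul_pow, ← Real.exp_nat_mul]; ring_nf

private lemma chernoff_high (n : ℕ) (p b : ℝ) (hb : 0 < b) (hpb : p = 1/2 + b) :
    ∑ k ∈ (range (n+1)).filter (fun k : ℕ => p * n < (k:ℝ)), ((n.choose k : ℕ):ℝ)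
      ≤ 2^n * Real.exp (-(2*b^2*n)) := by
  have step1 : ∑ k ∈ (range (n+1)).filter (fun k : ℕ => p * n < (k:ℝ)), ((n.choose k : ℕ):ℝ)
      ≤ ∑ k ∈ range (n+1), (n.choose k : ℝ) * Real.exp (4*b*((k:ℝ) - p*n)) := by
    calc ∑ k ∈ (range (n+1)).filter (fun k : ℕ => p * n < (k:ℝ)), ((n.choose k : ℕ):ℝ)
        ≤ ∑ k ∈ (range (n+1)).filter (fun k : ℕ => p * n < (k:ℝ)),
            (n.choose k : ℝ) * Real.exp (4*b*((k:ℝ) - p*n)) := by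
          apply Finset.sum_le_sum
          intro k hk
          simp only [mem_filter, mem_range] at hk
          have h1 : (1:ℝ) ≤ Real.exp (4*b*((k:ℝ) - p*n)) := by
            apply Real.one_le_exp
            have : (0:ℝ) ≤ (k:ℝ) - p*n := by linarith [hk.2]
            positivity
          nlinarith [show (0:ℝ) ≤ (n.choose k : ℝ) from Nat.cast_nonneg _]
      _ ≤ ∑ k ∈ range (n+1), (n.choose k : ℝ) * Real.exp (4*b*((k:ℝ) - p*n)) := by
          apply Finset.sum_le_sum_of_subset_of_nonneg (filter_subset _ _)
          intro k _ _
          positivity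
  have step2 : ∑ k ∈ range (n+1), (n.choose k : ℝ) * Real.exp (4*b*((k:ℝ) - p*n))
      = (Real.exp (-(4*b*p)) * (Real.exp (4*b) + 1))^n := by
    have expand : ∀ k : ℕ, Real.exp (4*b*((k:ℝ) - p*n)) = Real.exp ((-(4*b*p))*n) * Real.exp (4*b)^k := by
      intro k
      rw [← Real.exp_nat_mul, ← Real.exp_add]
      ring_nf
    calc ∑ k ∈ range (n+1), (n.choose k : ℝ) * Real.exp (4*b*((k:ℝ) - p*n))
        = Real.exp ((-(4*b*p))*n) * ∑ k ∈ range (n+1), Real.exp (4*b)^k * 1^(n-k) * n.choose k := by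
          rw [Finset.mul_sum]
          apply Finset.sum_congr rfl
          intro k _
          rw [expand k]; ring
      _ = Real.exp ((-(4*b*p))*n) * (Real.exp (4*b) + 1)^n := by rw [← add_pow]
      _ = (Real.exp (-(4*b*p)) * (Real.exp (4*b) + 1))^n := by
          rw [mul_pow, ← Real.exp_nat_mul]; ring_nf
  have base : Real.exp (-(4*b*p)) * (Real.exp (4*b) + 1) ≤ 2 * Real.exp (-(2*b^2)) := by
    have h1 : Real.exp (-(4*b*p)) * (Real.exp (4*b) + 1)
        = Real.exp (-(4*b^2)) * (Real.exp (2*b) + Real.exp (-(2*b))) := by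
      rw [mul_add, mul_add, ← Real.exp_add, ← Real.exp_add, ← Real.exp_add, hpb]
      ring_nf
    have h2 : Real.exp (2*b) + Real.exp (-(2*b)) = 2 * Real.cosh (2*b) := by
      rw [Real.cosh_eq]; ring
    have h3 : Real.cosh (2*b) ≤ Real.exp ((2*b)^2/2) := Real.cosh_le_exp_half_sq _
    have h4 : Real.exp ((2*b)^2/2) = Real.exp (2*b^2) := by ring_nf
    rw [h1, h2]
    have h5 : Real.exp (-(4*b^2)) * (2 * Real.cosh (2*b))
        ≤ Real.exp (-(4*b^2)) * (2 * Real.exp (2*b^2)) := by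
      have := Real.exp_pos (-(4*b^2))
      nlinarith [h3, h4 ▸ h3]
    calc Real.exp (-(4*b^2)) * (2 * Real.cosh (2*b))
        ≤ Real.exp (-(4*b^2)) * (2 * Real.exp (2*b^2)) := h5
      _ = 2 * (Real.exp (-(4*b^2)) * Real.exp (2*b^2)) := by ring
      _ = 2 * Real.exp (-(4*b^2) + 2*b^2) := by rw [Real.exp_add]
      _ = 2 * Real.exp (-(2*b^2)) := by ring_nf
  calc ∑ k ∈ (range (n+1)).filter (fun k : ℕ => p * n < (k:ℝ)), ((n.choose k : ℕ):ℝ)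
      ≤ (Real.exp (-(4*b*p)) * (Real.exp (4*b) + 1))^n := step1.trans_eq step2
    _ ≤ (2 * Real.exp (-(2*b^2)))^n := by
        apply pow_le_pow_left₀ (by positivity) base
    _ = 2^n * Real.exp (-(2*b^2*n)) := by
        rw [mul_pow, ← Real.exp_nat_mul]; ring_nf

set_option maxHeartbeats 1000000 in
theorem stmt7 (ℓ : ℕ) (p₁ p₂ c : ℝ)
    (hp₁ : 0 ≤ p₁) (h₁ : p₁ < 1/2) (h₂ : (1:ℝ)/2 < p₂) (hp₂ : p₂ ≤ 1)
    (hc : c = min (1/2 - p₁) (p₂ - 1/2))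
    (hℓ7 : 7 ≤ ℓ) (hℓ : (1 / c^2) * Real.log (ℓ + 1) ≤ ℓ) :
    Nat.card {x : List Bool // x.length = ℓ + 1 ∧
        (¬(p₁ * ℓ ≤ (wt (x.take ℓ) : ℝ) ∧ (wt (x.take ℓ) : ℝ) ≤ p₂ * ℓ) ∨
         ¬(p₁ * ℓ ≤ (wt (x.drop 1) : ℝ) ∧ (wt (x.drop 1) : ℝ) ≤ p₂ * ℓ))}
      ≤ 2^(ℓ-3) := by
  classical
  have hc0 : 0 < c := by rw [hc]; apply lt_min <;> linarith
  set T : Finset (Finset ℕ) :=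
    ((range ℓ).powerset).filter
      (fun s => ((s.card:ℝ) < p₁ * ℓ ∨ p₂ * ℓ < (s.card:ℝ))) with hT
  -- membership helper
  have memT : ∀ u : List Bool, u.length = ℓ →
      ¬(p₁ * ℓ ≤ (wt u : ℝ) ∧ (wt u : ℝ) ≤ p₂ * ℓ) → idx ℓ u ∈ T := by
    intro u hu hbad
    rw [hT, mem_filter]
    refine ⟨Finset.mem_powerset.2 (Finset.filter_subset _ _), ?_⟩
    rw [← wt_eq_card u hu]
    rcases not_and_or.1 hbad with h | h
    · exact Or.inl (not_le.1 h)
    · exact Or.inr (not_le.1 h)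
  -- injection step
  have key : Nat.card {x : List Bool // x.length = ℓ + 1 ∧
        (¬(p₁ * ℓ ≤ (wt (x.take ℓ) : ℝ) ∧ (wt (x.take ℓ) : ℝ) ≤ p₂ * ℓ) ∨
         ¬(p₁ * ℓ ≤ (wt (x.drop 1) : ℝ) ∧ (wt (x.drop 1) : ℝ) ≤ p₂ * ℓ))}
      ≤ Nat.card (Bool × Bool × {s // s ∈ T}) := by
    apply Nat.card_le_card_of_injective
      (f := fun x => if h : ¬(p₁ * ℓ ≤ (wt (x.1.take ℓ) : ℝ) ∧ (wt (x.1.take ℓ) : ℝ) ≤ p₂ * ℓ)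
        then (false, x.1.getD ℓ false,
          ⟨idx ℓ (x.1.take ℓ), memT _ (by simp [x.2.1]) h⟩)
        else (true, x.1.getD 0 false,
          ⟨idx ℓ (x.1.drop 1), memT _ (by simp [x.2.1]) (x.2.2.resolve_left h)⟩))
    intro x y hxy
    simp only [] at hxy
    have hx1 : x.1.length = ℓ + 1 := x.2.1
    have hy1 : y.1.length = ℓ + 1 := y.2.1
    have hxt : (x.1.take ℓ).length = ℓ := by simp [hx1]
    have hyt : (y.1.take ℓ).length = ℓ := by simp [hy1]
    have hxd : (x.1.drop 1).length = ℓ := by simp [hx1]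
    have hyd : (y.1.drop 1).length = ℓ := by simp [hy1]
    by_cases hx : ¬(p₁ * ℓ ≤ (wt (x.1.take ℓ) : ℝ) ∧ (wt (x.1.take ℓ) : ℝ) ≤ p₂ * ℓ) <;>
      by_cases hy : ¬(p₁ * ℓ ≤ (wt (y.1.take ℓ) : ℝ) ∧ (wt (y.1.take ℓ) : ℝ) ≤ p₂ * ℓ)
    · rw [dif_pos hx, dif_pos hy] at hxy
      have hbit : x.1.getD ℓ false = y.1.getD ℓ false := congrArg (fun t => t.2.1) hxy
      have hidx : idx ℓ (x.1.take ℓ) = idx ℓ (y.1.take ℓ) :=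
        congrArg (fun t => (t.2.2 : Finset ℕ)) hxy
      have htake : x.1.take ℓ = y.1.take ℓ := idx_inj hxt hyt hidx
      apply Subtype.ext
      rw [take_decomp hx1, take_decomp hy1, htake, hbit]
    · rw [dif_pos hx, dif_neg hy] at hxy
      have : False := by simpa using congrArg (fun t => t.1) hxy
      exact this.elim
    · rw [dif_neg hx, dif_pos hy] at hxy
      have : False := by simpa using congrArg (fun t => t.1) hxy
      exact this.elim
    · rw [dif_neg hx, dif_neg hy] at hxy
      have hbit : x.1.getD 0 false = y.1.getD 0 false := congrArg (fun t => t.2.1) hxy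
      have hidx : idx ℓ (x.1.drop 1) = idx ℓ (y.1.drop 1) :=
        congrArg (fun t => (t.2.2 : Finset ℕ)) hxy
      have hdrop : x.1.drop 1 = y.1.drop 1 := idx_inj hxd hyd hidx
      apply Subtype.ext
      rw [drop_decomp hx1, drop_decomp hy1, hdrop, hbit]
  -- cardinality of the target
  have hcard2 : Nat.card (Bool × Bool × {s // s ∈ T}) = 4 * T.card := by
    rw [Nat.card_prod, Nat.card_prod]
    simp only [Nat.card_eq_fintype_card, Fintype.card_bool, Fintype.card_coe]
    ring
  -- fiberwise bound
  set Tk : Finset ℕ := (range (ℓ+1)).filter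
    (fun k : ℕ => ((k:ℝ) < p₁ * ℓ ∨ p₂ * ℓ < (k:ℝ))) with hTk
  have hfib : T.card ≤ ∑ k ∈ Tk, ℓ.choose k := by
    rw [Finset.card_eq_sum_card_fiberwise (f := Finset.card) (t := Tk)
      (fun s hs => by
        rw [Finset.mem_coe, hT, mem_filter, Finset.mem_powerset] at hs
        rw [Finset.mem_coe, hTk, mem_filter, mem_range]
        exact ⟨Nat.lt_succ_of_le ((Finset.card_le_card hs.1).trans_eq (card_range ℓ)), hs.2⟩)]
    apply Finset.sum_le_sum
    intro k hk
    calc (T.filter (fun s => s.card = k)).card ≤ ((range ℓ).powersetCard k).card := by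
          apply Finset.card_le_card
          intro s hs
          rw [mem_filter, hT, mem_filter, Finset.mem_powerset] at hs
          exact Finset.mem_powersetCard.2 ⟨hs.1.1, hs.2⟩
      _ = ℓ.choose k := by rw [Finset.card_powersetCard, Finset.card_range]
  -- split the sum in ℕ
  have hsplit : (∑ k ∈ Tk, ℓ.choose k) ≤
      (∑ k ∈ (range (ℓ+1)).filter (fun k : ℕ => (k:ℝ) < p₁ * ℓ), ℓ.choose k) +
      (∑ k ∈ (range (ℓ+1)).filter (fun k : ℕ => p₂ * ℓ < (k:ℝ)), ℓ.choose k) := by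
    rw [hTk, Finset.filter_or]
    calc ∑ k ∈ _ ∪ _, ℓ.choose k
        ≤ (∑ k ∈ _ ∪ _, ℓ.choose k) + ∑ k ∈ _ ∩ _, ℓ.choose k := Nat.le_add_right _ _
      _ = _ := Finset.sum_union_inter
  -- real analysis part
  have ha0 : (0:ℝ) < 1/2 - p₁ := by linarith
  have hb0 : (0:ℝ) < p₂ - 1/2 := by linarith
  have hac : c ≤ 1/2 - p₁ := by rw [hc]; exact min_le_left _ _
  have hbc : c ≤ p₂ - 1/2 := by rw [hc]; exact min_le_right _ _
  have hlow := chernoff_low ℓ p₁ (1/2 - p₁) ha0 (by ring)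
  have hhigh := chernoff_high ℓ p₂ (p₂ - 1/2) hb0 (by ring)
  have hmono1 : Real.exp (-(2*(1/2-p₁)^2*ℓ)) ≤ Real.exp (-(2*c^2*ℓ)) := by
    apply Real.exp_le_exp.2
    have : c^2 ≤ (1/2-p₁)^2 := by nlinarith
    have hl0 : (0:ℝ) ≤ (ℓ:ℕ) := Nat.cast_nonneg _
    nlinarith
  have hmono2 : Real.exp (-(2*(p₂-1/2)^2*ℓ)) ≤ Real.exp (-(2*c^2*ℓ)) := by
    apply Real.exp_le_exp.2
    have : c^2 ≤ (p₂-1/2)^2 := by nlinarith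
    have hl0 : (0:ℝ) ≤ (ℓ:ℕ) := Nat.cast_nonneg _
    nlinarith
  -- log bound
  have hlpos : (0:ℝ) < (ℓ:ℝ) + 1 := by positivity
  have hlog : Real.log ((ℓ:ℝ) + 1) ≤ c^2 * ℓ := by
    have hc2 : (0:ℝ) < c^2 := by positivity
    rw [div_mul_eq_mul_div, one_mul, div_le_iff₀ hc2] at hℓ
    linarith [hℓ]
  have hexp : Real.exp (-(2*c^2*ℓ)) ≤ (((ℓ:ℝ)+1)⁻¹)^2 := by
    have h1 : Real.exp (-(2*c^2*ℓ)) ≤ Real.exp (-(2 * Real.log ((ℓ:ℝ)+1))) := by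
      apply Real.exp_le_exp.2; linarith
    have h2 : Real.exp (-(2 * Real.log ((ℓ:ℝ)+1))) = (((ℓ:ℝ)+1)⁻¹)^2 := by
      rw [show -(2 * Real.log ((ℓ:ℝ)+1)) = (2:ℕ) * (-Real.log ((ℓ:ℝ)+1)) by push_cast; ring,
        Real.exp_nat_mul, Real.exp_neg, Real.exp_log hlpos]
    rw [← h2]; exact h1
  have hl8 : (8:ℝ) ≤ (ℓ:ℝ) + 1 := by
    have : (7:ℝ) ≤ (ℓ:ℝ) := by exact_mod_cast hℓ7
    linarith
  have hinv : (((ℓ:ℝ)+1)⁻¹)^2 ≤ 1/64 := by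
    have h1 : ((ℓ:ℝ)+1)⁻¹ ≤ 8⁻¹ := inv_anti₀ (by norm_num) hl8
    calc (((ℓ:ℝ)+1)⁻¹)^2 ≤ (8⁻¹:ℝ)^2 := by
          apply pow_le_pow_left₀ (by positivity) h1
      _ = 1/64 := by norm_num
  -- assemble the numeric bound  B ≤ 2^(ℓ-5)
  have hB : (∑ k ∈ Tk, ℓ.choose k) ≤ 2^(ℓ-5) := by
    have hreal : ((∑ k ∈ Tk, ℓ.choose k : ℕ) : ℝ) ≤ (2:ℝ)^(ℓ-5) := by
      have hcast : ((∑ k ∈ Tk, ℓ.choose k : ℕ) : ℝ) ≤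
          (∑ k ∈ (range (ℓ+1)).filter (fun k : ℕ => (k:ℝ) < p₁ * ℓ), ((ℓ.choose k : ℕ):ℝ)) +
          (∑ k ∈ (range (ℓ+1)).filter (fun k : ℕ => p₂ * ℓ < (k:ℝ)), ((ℓ.choose k : ℕ):ℝ)) := by
        push_cast
        exact_mod_cast hsplit
      have hchain : ((∑ k ∈ Tk, ℓ.choose k : ℕ) : ℝ) ≤ 2 * (2^ℓ * Real.exp (-(2*c^2*ℓ))) := by
        have h1 := hcast.trans (add_le_add hlow hhigh)
        have h2 : (2:ℝ)^ℓ * Real.exp (-(2*(1/2-p₁)^2*ℓ)) + 2^ℓ * Real.exp (-(2*(p₂-1/2)^2*ℓ))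
            ≤ 2^ℓ * Real.exp (-(2*c^2*ℓ)) + 2^ℓ * Real.exp (-(2*c^2*ℓ)) :=
          add_le_add (mul_le_mul_of_nonneg_left hmono1 (by positivity))
            (mul_le_mul_of_nonneg_left hmono2 (by positivity))
        linarith [h1, h2]
      have h2pow : (2:ℝ)^ℓ = 2^(ℓ-5) * 32 := by
        rw [show (32:ℝ) = 2^(5:ℕ) by norm_num, ← pow_add,
          show ℓ - 5 + 5 = ℓ from by omega]
      calc ((∑ k ∈ Tk, ℓ.choose k : ℕ) : ℝ)
          ≤ 2 * (2^ℓ * Real.exp (-(2*c^2*ℓ))) := hchain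
        _ ≤ 2 * (2^ℓ * (((ℓ:ℝ)+1)⁻¹)^2) := by
            gcongr <;> exact hexp
        _ ≤ 2 * (2^ℓ * (1/64)) := by
            gcongr
        _ = (2:ℝ)^(ℓ-5) := by rw [h2pow]; ring
    exact_mod_cast hreal
  -- final assembly
  calc Nat.card _ ≤ Nat.card (Bool × Bool × {s // s ∈ T}) := key
    _ = 4 * T.card := hcard2
    _ ≤ 4 * (∑ k ∈ Tk, ℓ.choose k) := by omega
    _ ≤ 4 * 2^(ℓ-5) := by omega
    _ = 2^(ℓ-3) := by
        rw [show (4:ℕ) = 2^2 by norm_num, ← pow_add,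
          show 2 + (ℓ - 5) = ℓ - 3 from by omega]
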